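/- Let n ≥ 1 and δ ≥ 1 be integers. There exists a prime number p with p ≤ ((δ+1)³·n^{2δ+1})² such that the map sending an exponent vector e = (e₁,…,eₙ) ∈ ℕⁿ to the integer Σ_{i=1}^{n} eᵢ·wᵢ, where wᵢ = (δ+1)^{i-1} mod p, is injective on the set {e ∈ ℕⁿ : e₁+⋯+eₙ ≤ δ}. -/

import Mathlib

open Finset

/-- `m² < 2^(m-1)` for `m ≥ 7`. -/
lemma stmt7_aux_sq_lt : ∀ {m : ℕ}, 7 ≤ m → m ^ 2 < 2 ^ (m - 1) := by
  intro m hm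
  induction m with
  | zero => omega
  | succ k ih =>
    rcases Nat.lt_or_ge k 7 with hk | hk
    · have : k = 6 := by omega
      subst this; norm_num
    · have h1 : k ^ 2 < 2 ^ (k - 1) := ih hk
      have h2 : (k + 1) ^ 2 ≤ 2 * k ^ 2 := by nlinarith
      have h3 : 2 * k ^ 2 < 2 * 2 ^ (k - 1) := by omega
      have h4 : 2 * 2 ^ (k - 1) = 2 ^ (k - 1 + 1) := by rw [pow_succ]; ring
      have h5 : k - 1 + 1 = k + 1 - 1 := by omega
      calc (k + 1) ^ 2 ≤ 2 * k ^ 2 := h2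
        _ < 2 * 2 ^ (k - 1) := h3
        _ = 2 ^ (k - 1 + 1) := h4
        _ = 2 ^ (k + 1 - 1) := by rw [h5]

/-- There are more than `m` primes up to `m²`, for `m ≥ 8`. -/
lemma stmt7_aux_primes (m : ℕ) (hm : 8 ≤ m) :
    m < ((Finset.range (m ^ 2 + 1)).filter Nat.Prime).card := by
  by_contra hcon
  push_neg at hcon
  have hm2' : 64 ≤ m ^ 2 := by nlinarith
  set M2 := m ^ 2 with hM2
  have hm2 : 64 ≤ M2 := hm2'
  set k := M2 / 2 with hk
  have hdm := Nat.div_add_mod M2 2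
  have hmod : M2 % 2 < 2 := Nat.mod_lt _ (by norm_num)
  have hk32 : 32 ≤ k := by omega
  have h2k : 2 * k ≤ M2 := by omega
  have h2k' : M2 - 1 ≤ 2 * k := by omega
  have hbin := Nat.four_pow_lt_mul_centralBinom k (by omega)
  have hprod := Nat.prod_pow_factorization_centralBinom k
  -- central binomial ≤ (2k)^(number of primes ≤ m²)
  have hstep : Nat.centralBinom k ≤ (2 * k) ^ m := by
    have e0 : ∏ p ∈ Finset.range (2 * k + 1), p ^ (Nat.centralBinom k).factorization p
        = ∏ p ∈ (Finset.range (2 * k + 1)).filter Nat.Prime,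
            p ^ (Nat.centralBinom k).factorization p := by
      rw [← Finset.prod_filter_mul_prod_filter_not (Finset.range (2 * k + 1)) Nat.Prime]
      have h1 : ∏ p ∈ (Finset.range (2 * k + 1)).filter (fun p => ¬ Nat.Prime p),
          p ^ (Nat.centralBinom k).factorization p = 1 := by
        apply Finset.prod_eq_one
        intro p hp
        rw [Nat.factorization_eq_zero_of_not_prime _ (Finset.mem_filter.mp hp).2, pow_zero]
      rw [h1, mul_one]
    have e1 : Nat.centralBinom k
        = ∏ p ∈ (Finset.range (2 * k + 1)).filter Nat.Prime,
            p ^ (Nat.centralBinom k).factorization p := hprod.symm.trans e0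
    have e2 : Nat.centralBinom k
        ≤ ∏ _p ∈ (Finset.range (2 * k + 1)).filter Nat.Prime, (2 * k) := by
      rw [e1]
      apply Finset.prod_le_prod (fun _ _ => Nat.zero_le _)
      intro p _
      exact Nat.pow_factorization_choose_le (by omega)
    rw [Finset.prod_const] at e2
    refine e2.trans (Nat.pow_le_pow_right (by omega) ?_)
    calc ((Finset.range (2 * k + 1)).filter Nat.Prime).card
        ≤ ((Finset.range (M2 + 1)).filter Nat.Prime).card := by
          apply Finset.card_le_card
          apply Finset.filter_subset_filter
          apply Finset.range_subset_range.mpr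
          omega
      _ ≤ m := hcon
  -- lower and upper bounds on 4^k
  have hlow : 2 ^ (M2 - 1) ≤ 4 ^ k := by
    have : (4 : ℕ) ^ k = 2 ^ (2 * k) := by rw [pow_mul]; norm_num
    rw [this]
    exact Nat.pow_le_pow_right (by norm_num) h2k'
  have hup : 4 ^ k < M2 * (2 * k) ^ m := lt_of_lt_of_le hbin
    (Nat.mul_le_mul (by omega) hstep)
  have hup2 : M2 * (2 * k) ^ m ≤ M2 * M2 ^ m :=
    Nat.mul_le_mul le_rfl (Nat.pow_le_pow_left h2k m)
  have hfin : M2 * M2 ^ m < 2 ^ (M2 - 1) := by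
    have hsq : m ^ 2 < 2 ^ (m - 1) := stmt7_aux_sq_lt (by omega)
    have e3 : M2 * M2 ^ m = M2 ^ (m + 1) := by rw [pow_succ]; ring
    have e4 : M2 ^ (m + 1) < (2 ^ (m - 1)) ^ (m + 1) := by
      rw [hM2]
      exact Nat.pow_lt_pow_left hsq (by omega)
    have e5 : (2 ^ (m - 1) : ℕ) ^ (m + 1) = 2 ^ ((m - 1) * (m + 1)) := by rw [← pow_mul]
    have e6 : (m - 1) * (m + 1) = M2 - 1 := by
      obtain ⟨s, rfl⟩ : ∃ s, m = s + 1 := ⟨m - 1, by omega⟩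
      have h7 : s * (s + 1 + 1) = s * s + 2 * s := by ring
      have h8 : (s + 1) ^ 2 = s * s + 2 * s + 1 := by ring
      simp only [hM2, Nat.add_sub_cancel]
      omega
    rw [e3]
    calc M2 ^ (m + 1) < (2 ^ (m - 1)) ^ (m + 1) := e4
      _ = 2 ^ (M2 - 1) := by rw [e5, e6]
  have hcontra : (2 : ℕ) ^ (M2 - 1) < 2 ^ (M2 - 1) :=
    lt_of_le_of_lt hlow ((hup.trans_le hup2).trans hfin)
  exact lt_irrefl _ hcontra

/-- The base-`b` evaluation of a digit vector is `< b^n`. -/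
lemma stmt7_base_lt (b : ℕ) :
    ∀ (n : ℕ) (e : Fin n → ℕ), (∀ i, e i < b) → (∑ i, e i * b ^ (i : ℕ)) < b ^ n := by
  intro n
  induction n with
  | zero => intro e _; simp
  | succ n ih =>
    intro e he
    have hb : 1 ≤ b := by have := he 0; omega
    rw [Fin.sum_univ_succ]
    have h1 : ∑ i : Fin n, e i.succ * b ^ ((i.succ : ℕ))
        = b * ∑ i : Fin n, e i.succ * b ^ (i : ℕ) := by
      rw [Finset.mul_sum]
      apply Finset.sum_congr rfl
      intro i _
      rw [Fin.val_succ, pow_succ]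
      ring
    rw [h1]
    have hT : ∑ i : Fin n, e i.succ * b ^ (i : ℕ) < b ^ n := ih _ (fun i => he i.succ)
    have h0 : e 0 * b ^ ((0 : Fin (n + 1)) : ℕ) = e 0 := by simp
    rw [h0, pow_succ]
    calc e 0 + b * ∑ i : Fin n, e i.succ * b ^ (i : ℕ)
        < b + b * ∑ i : Fin n, e i.succ * b ^ (i : ℕ) := by have := he 0; omega
      _ = b * ((∑ i : Fin n, e i.succ * b ^ (i : ℕ)) + 1) := by ring
      _ ≤ b * b ^ n := Nat.mul_le_mul le_rfl (by omega)
      _ = b ^ n * b := by ring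

/-- Base-`b` representation is injective on digit vectors. -/
lemma stmt7_base_inj (b : ℕ) :
    ∀ (n : ℕ) (e e' : Fin n → ℕ), (∀ i, e i < b) → (∀ i, e' i < b) →
      (∑ i, e i * b ^ (i : ℕ)) = (∑ i, e' i * b ^ (i : ℕ)) → e = e' := by
  intro n
  induction n with
  | zero => intro e e' _ _ _; funext i; exact absurd i.2 (by omega)
  | succ n ih =>
    intro e e' he he' heq
    have hb : 1 ≤ b := by have := he 0; omega
    rw [Fin.sum_univ_succ, Fin.sum_univ_succ] at heq
    have hre : ∀ (f : Fin (n+1) → ℕ), (f 0 * b ^ ((0 : Fin (n+1)) : ℕ)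
        + ∑ i : Fin n, f i.succ * b ^ ((i.succ : ℕ)))
        = f 0 + b * ∑ i : Fin n, f i.succ * b ^ (i : ℕ) := by
      intro f
      have h1 : ∑ i : Fin n, f i.succ * b ^ ((i.succ : ℕ))
          = b * ∑ i : Fin n, f i.succ * b ^ (i : ℕ) := by
        rw [Finset.mul_sum]
        apply Finset.sum_congr rfl
        intro i _
        rw [Fin.val_succ, pow_succ]
        ring
      rw [h1]
      simp
    rw [hre e, hre e'] at heq
    have h0 : e 0 = e' 0 := by
      have h1 := congrArg (· % b) heq
      simpa [Nat.add_mul_mod_self_left, Nat.mod_eq_of_lt (he 0), Nat.mod_eq_of_lt (he' 0)]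
        using h1
    have hT : (∑ i : Fin n, e i.succ * b ^ (i : ℕ)) = ∑ i : Fin n, e' i.succ * b ^ (i : ℕ) := by
      have : b * (∑ i : Fin n, e i.succ * b ^ (i : ℕ))
          = b * ∑ i : Fin n, e' i.succ * b ^ (i : ℕ) := by omega
      exact Nat.eq_of_mul_eq_mul_left (by omega) this
    have htail := ih (fun i => e i.succ) (fun i => e' i.succ)
      (fun i => he i.succ) (fun i => he' i.succ) hT
    funext i
    refine Fin.cases ?_ ?_ i
    · exact h0
    · intro j
      exact congrFun htail j

/-- Counting bound: a set of exponent vectors of total degree `≤ δ` in `n ≥ 1` variables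
has at most `(δ+1)·n^δ` elements. -/
lemma stmt7_card_bound (n δ : ℕ) (hn : 1 ≤ n) (S : Finset (Fin n → ℕ))
    (hS : ∀ e ∈ S, ∑ i, e i ≤ δ) : S.card ≤ (δ + 1) * n ^ δ := by
  classical
  set A : (Fin n → ℕ) → Multiset (Fin n) := fun e => ∑ i, e i • ({i} : Multiset (Fin n))
    with hA
  have hcount : ∀ (e : Fin n → ℕ) (j : Fin n), (A e).count j = e j := by
    intro e j
    rw [hA]
    rw [Multiset.count_sum']
    simp [Multiset.count_nsmul, Multiset.count_singleton]
  have hcard : ∀ e : Fin n → ℕ, Multiset.card (A e) = ∑ i, e i := by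
    intro e
    rw [hA]
    rw [show (Multiset.card (∑ i, e i • ({i} : Multiset (Fin n))))
        = ∑ i, Multiset.card (e i • ({i} : Multiset (Fin n))) from
      map_sum (⟨⟨Multiset.card, Multiset.card_zero⟩, Multiset.card_add⟩ :
        Multiset (Fin n) →+ ℕ) _ Finset.univ]
    simp [Multiset.card_nsmul]
  set d : Fin n := ⟨0, hn⟩ with hd
  set f : (Fin n → ℕ) → ℕ × (Fin δ → Fin n) :=
    fun e => (∑ i, e i, fun j => (A e).toList.getD (j : ℕ) d) with hf
  have hmaps : ∀ e ∈ S, f e ∈ (Finset.range (δ + 1)) ×ˢ (Finset.univ : Finset (Fin δ → Fin n)) := by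
    intro e he
    rw [Finset.mem_product]
    refine ⟨?_, Finset.mem_univ _⟩
    rw [Finset.mem_range]
    exact Nat.lt_succ_of_le (hS e he)
  have hinj : ∀ e ∈ S, ∀ e' ∈ S, f e = f e' → e = e' := by
    intro e he e' he' hfe
    rw [hf, Prod.mk.injEq] at hfe
    obtain ⟨hsum, hfun⟩ := hfe
    have hlen : (A e).toList.length = (A e').toList.length := by
      rw [Multiset.length_toList, Multiset.length_toList, hcard, hcard, hsum]
    have hlenδ : (A e).toList.length ≤ δ := by
      rw [Multiset.length_toList, hcard]; exact hS e he
    have hlist : (A e).toList = (A e').toList := by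
      apply List.ext_getElem hlen
      intro j h1 h2
      have hjδ : j < δ := lt_of_lt_of_le h1 hlenδ
      have h3 := congrFun hfun ⟨j, hjδ⟩
      simp only at h3
      rw [List.getD_eq_getElem _ _ h1, List.getD_eq_getElem _ _ h2] at h3
      exact h3
    have hAe : A e = A e' := by
      rw [← Multiset.coe_toList (A e), ← Multiset.coe_toList (A e'), hlist]
    funext j
    rw [← hcount e j, ← hcount e' j, hAe]
  calc S.card ≤ ((Finset.range (δ + 1)) ×ˢ (Finset.univ : Finset (Fin δ → Fin n))).card :=
        Finset.card_le_card_of_injOn f hmaps (fun a ha b hb h => hinj a ha b hb h)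
    _ = (δ + 1) * n ^ δ := by
        rw [Finset.card_product, Finset.card_range, Finset.card_univ, Fintype.card_fun]
        simp

/-- For `n ≥ 1`, `δ ≥ 1`, there is a prime `p ≤ ((δ+1)³·n^(2δ+1))²` such
that the map `e ↦ Σᵢ eᵢ·wᵢ`, with weights `wᵢ = (δ+1)^(i-1) mod p`, is injective on
the set of exponent vectors of total degree at most `δ`. -/
theorem stmt7 (n δ : ℕ) (hn : 1 ≤ n) (hδ : 1 ≤ δ) :
    ∃ p : ℕ, p.Prime ∧ p ≤ ((δ + 1) ^ 3 * n ^ (2 * δ + 1)) ^ 2 ∧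
      Set.InjOn (fun e : Fin n → ℕ => ∑ i, e i * ((δ + 1) ^ (i : ℕ) % p))
        {e : Fin n → ℕ | ∑ i, e i ≤ δ} := by
  classical
  set m : ℕ := (δ + 1) ^ 3 * n ^ (2 * δ + 1) with hm
  set N : (Fin n → ℕ) → ℕ := fun e => ∑ i, e i * (δ + 1) ^ (i : ℕ) with hN
  set M : Finset (Fin n → ℕ) :=
    (Fintype.piFinset fun _ : Fin n => Finset.range (δ + 1)).filter
      (fun e => ∑ i, e i ≤ δ) with hM
  have hdig : ∀ e : Fin n → ℕ, (∑ i, e i ≤ δ) → ∀ i, e i < δ + 1 := by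
    intro e he i
    have : e i ≤ ∑ j, e j :=
      Finset.single_le_sum (f := fun j => e j) (fun j _ => Nat.zero_le _) (Finset.mem_univ i)
    omega
  have hmem : ∀ e : Fin n → ℕ, (∑ i, e i ≤ δ) → e ∈ M := by
    intro e he
    rw [hM, Finset.mem_filter]
    refine ⟨?_, he⟩
    rw [Fintype.mem_piFinset]
    intro i
    rw [Finset.mem_range]
    exact hdig e he i
  have hMsum : ∀ e ∈ M, ∑ i, e i ≤ δ := by
    intro e he
    rw [hM, Finset.mem_filter] at he
    exact he.2
  have hcardM : M.card ≤ (δ + 1) * n ^ δ := stmt7_card_bound n δ hn M hMsum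
  set F : (Fin n → ℕ) → (Fin n → ℕ) → ℕ :=
    fun e f => if N e < N f then N f - N e else 1 with hF
  set D : ℕ := ∏ e ∈ M, ∏ f ∈ M, F e f with hD
  have hFpos : ∀ e f, 0 < F e f := by
    intro e f
    rw [hF]
    dsimp only
    split
    · omega
    · omega
  have hDpos : 0 < D := by
    rw [hD]
    apply Finset.prod_pos
    intro e _
    apply Finset.prod_pos
    intro f _
    exact hFpos e f
  have hD0 : D ≠ 0 := hDpos.ne' 
  have hNlt : ∀ e ∈ M, N e < (δ + 1) ^ n := by
    intro e he
    exact stmt7_base_lt (δ + 1) n e (hdig e (hMsum e he))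
  have hFle : ∀ e ∈ M, ∀ f ∈ M, F e f ≤ (δ + 1) ^ n := by
    intro e _ f hf
    rw [hF]
    dsimp only
    split
    · have := hNlt f hf
      omega
    · exact Nat.one_le_pow _ _ (by omega)
  -- D ≤ 2 ^ m
  have hDle : D ≤ 2 ^ m := by
    have step1 : D ≤ ((δ + 1) ^ n) ^ (M.card * M.card) := by
      rw [hD]
      calc ∏ e ∈ M, ∏ f ∈ M, F e f
          ≤ ∏ _e ∈ M, ((δ + 1) ^ n) ^ M.card := by
            apply Finset.prod_le_prod (fun _ _ => Nat.zero_le _)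
            intro e he
            exact Finset.prod_le_pow_card M _ _ (fun f hf => hFle e he f hf)
        _ = (((δ + 1) ^ n) ^ M.card) ^ M.card := Finset.prod_const _
        _ = ((δ + 1) ^ n) ^ (M.card * M.card) := by rw [← pow_mul]
    have hb2 : (δ + 1 : ℕ) ≤ 2 ^ δ := Nat.lt_two_pow_self (n := δ)
    have step2 : ((δ + 1) ^ n) ^ (M.card * M.card) ≤ (2 ^ (δ * n)) ^ (M.card * M.card) := by
      apply Nat.pow_le_pow_left
      calc (δ + 1 : ℕ) ^ n ≤ (2 ^ δ) ^ n := Nat.pow_le_pow_left hb2 n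
        _ = 2 ^ (δ * n) := by rw [← pow_mul]
    have step3 : ((2 : ℕ) ^ (δ * n)) ^ (M.card * M.card) = 2 ^ (δ * n * (M.card * M.card)) := by
      rw [← pow_mul]
    have step4 : δ * n * (M.card * M.card) ≤ m := by
      have hKK : M.card * M.card ≤ ((δ + 1) * n ^ δ) * ((δ + 1) * n ^ δ) :=
        Nat.mul_le_mul hcardM hcardM
      have e1 : δ * n * (((δ + 1) * n ^ δ) * ((δ + 1) * n ^ δ))
          = (δ * (δ + 1) ^ 2) * (n * (n ^ δ * n ^ δ)) := by ring
      have e2 : n * (n ^ δ * n ^ δ) = n ^ (2 * δ + 1) := by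
        rw [← pow_add, ← pow_succ']
        congr 1
        omega
      calc δ * n * (M.card * M.card)
          ≤ δ * n * (((δ + 1) * n ^ δ) * ((δ + 1) * n ^ δ)) := Nat.mul_le_mul le_rfl hKK
        _ = (δ * (δ + 1) ^ 2) * (n * (n ^ δ * n ^ δ)) := e1
        _ = (δ * (δ + 1) ^ 2) * n ^ (2 * δ + 1) := by rw [e2]
        _ ≤ (δ + 1) ^ 3 * n ^ (2 * δ + 1) := by
            apply Nat.mul_le_mul _ le_rfl
            calc δ * (δ + 1) ^ 2 ≤ (δ + 1) * (δ + 1) ^ 2 :=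
                  Nat.mul_le_mul (by omega) le_rfl
              _ = (δ + 1) ^ 3 := by ring
        _ = m := by rw [hm]
    calc D ≤ ((δ + 1) ^ n) ^ (M.card * M.card) := step1
      _ ≤ (2 ^ (δ * n)) ^ (M.card * M.card) := step2
      _ = 2 ^ (δ * n * (M.card * M.card)) := step3
      _ ≤ 2 ^ m := Nat.pow_le_pow_right (by norm_num) step4
  -- number of prime factors of D is at most m
  have hω : D.primeFactors.card ≤ m := by
    have h1 : 2 ^ D.primeFactors.card ≤ ∏ p ∈ D.primeFactors, p :=
      Finset.pow_card_le_prod _ _ _ (fun p hp => (Nat.prime_of_mem_primeFactors hp).two_le)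
    have h2 : (∏ p ∈ D.primeFactors, p) ≤ D :=
      Nat.le_of_dvd hDpos (Nat.prod_primeFactors_dvd D)
    have h3 : 2 ^ D.primeFactors.card ≤ 2 ^ m := le_trans h1 (le_trans h2 hDle)
    exact (Nat.pow_le_pow_iff_right (by norm_num)).mp h3
  -- there is a prime p ≤ m² not dividing D
  have hm8 : 8 ≤ m := by
    have h1 : 8 ≤ (δ + 1) ^ 3 := by
      calc (8 : ℕ) = 2 ^ 3 := by norm_num
        _ ≤ (δ + 1) ^ 3 := Nat.pow_le_pow_left (by omega) 3
    have h2 : 1 ≤ n ^ (2 * δ + 1) := Nat.one_le_pow _ _ (by omega)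
    calc (8 : ℕ) = 8 * 1 := by norm_num
      _ ≤ (δ + 1) ^ 3 * n ^ (2 * δ + 1) := Nat.mul_le_mul h1 h2
      _ = m := by rw [hm]
  have hprimes := stmt7_aux_primes m hm8
  set P : Finset ℕ := (Finset.range (m ^ 2 + 1)).filter Nat.Prime with hP
  have hex : (P \ D.primeFactors).Nonempty := by
    by_contra hne
    rw [Finset.not_nonempty_iff_eq_empty, Finset.sdiff_eq_empty_iff_subset] at hne
    have := Finset.card_le_card hne
    omega
  obtain ⟨p, hp⟩ := hex
  rw [Finset.mem_sdiff] at hp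
  obtain ⟨hpP, hpD⟩ := hp
  rw [hP, Finset.mem_filter, Finset.mem_range] at hpP
  obtain ⟨hplt, hpprime⟩ := hpP
  have hpnd : ¬ (p ∣ D) := by
    intro hdvd
    exact hpD (Nat.mem_primeFactors.mpr ⟨hpprime, hdvd, hD0⟩)
  refine ⟨p, hpprime, by omega, ?_⟩
  -- injectivity
  intro e he f hf heq
  simp only [Set.mem_setOf_eq] at he hf
  simp only at heq
  have heM : e ∈ M := hmem e he
  have hfM : f ∈ M := hmem f hf
  -- equality modulo p
  have hzmod : ((N e : ℕ) : ZMod p) = ((N f : ℕ) : ZMod p) := by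
    have h1 := congrArg (fun t : ℕ => (t : ZMod p)) heq
    rw [hN]
    dsimp only
    push_cast
    simp only [Nat.cast_sum, Nat.cast_mul, ZMod.natCast_mod] at h1
    push_cast at h1
    exact h1
  -- key step: no collision of distinct values
  have key : ∀ a c : Fin n → ℕ, a ∈ M → c ∈ M → N a < N c →
      ((N a : ℕ) : ZMod p) = ((N c : ℕ) : ZMod p) → False := by
    intro a c ha hc hlt hcast
    have hdvd : p ∣ N c - N a := by
      have h0 : ((N c - N a : ℕ) : ZMod p) = 0 := by
        rw [Nat.cast_sub hlt.le, hcast]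
        ring
      exact (ZMod.natCast_eq_zero_iff _ _).mp h0
    have hFac : F a c = N c - N a := by rw [hF]; exact if_pos hlt
    have hFD : F a c ∣ D := by
      rw [hD]
      exact dvd_trans (Finset.dvd_prod_of_mem (fun f => F a f) hc)
        (Finset.dvd_prod_of_mem (fun e => ∏ f ∈ M, F e f) ha)
    exact hpnd (dvd_trans (hFac ▸ hdvd) hFD)
  rcases lt_trichotomy (N e) (N f) with hlt | heqN | hgt
  · exact absurd hzmod (fun h => key e f heM hfM hlt h)
  · exact stmt7_base_inj (δ + 1) n e f (hdig e he) (hdig f hf) heqN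
  · exact absurd hzmod.symm (fun h => key f e hfM heM hgt h)
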